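/- Let n ≥ 1 and let G be a chordal simple graph on the vertex set {1, …, n} with maximal cliques C₁, …, C_T (a clique is maximal if it is not contained in any other clique of G). Let X be an n × n real symmetric matrix such that for every t ∈ {1, …, T} the principal submatrix of X with rows and columns indexed by C_t is positive semidefinite. Then there exists an n × n real positive semidefinite matrix Y with Y[i,i] = X[i,i] for every vertex i and Y[i,j] = X[i,j] for every edge (i,j) of G; that is, X is positive-semidefinite-completable in the edge set of G. -/

import Mathlib

set_option linter.unusedSectionVars false
set_option linter.unusedVariables false
set_option maxHeartbeats 1600000

/-- A simple graph is *chordal* if every cycle of length at least 4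
(a sequence of pairwise distinct vertices, cyclically consecutively adjacent)
has a chord, i.e. an edge of the graph joining two non-consecutive vertices
of the cycle. Cycles of length `≥ 4` are indexed by `Fin (k + 4)`, with
cyclic (mod `k + 4`) successor `i + 1`. -/
def SimpleGraph.IsChordal {V : Type*} (G : SimpleGraph V) : Prop :=
  ∀ (k : ℕ) (v : Fin (k + 4) → V), Function.Injective v →
    (∀ i : Fin (k + 4), G.Adj (v i) (v (i + 1))) →
    ∃ i j : Fin (k + 4), i ≠ j ∧ j ≠ i + 1 ∧ i ≠ j + 1 ∧ G.Adj (v i) (v j)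

/-- A *maximal clique* of `G` is a clique not contained in any other clique of `G`. -/
def SimpleGraph.IsMaximalClique {V : Type*} (G : SimpleGraph V)
    (C : Finset V) : Prop :=
  G.IsClique (C : Set V) ∧
    ∀ D : Finset V, G.IsClique (D : Set V) → C ⊆ D → C = D

open Matrix
namespace CC
variable {V : Type} [Fintype V] [DecidableEq V] (G : SimpleGraph V)
lemma sum_restrict (p : V → Prop) [DecidablePred p] (f : V → ℝ)
    (hf : ∀ i, ¬ p i → f i = 0) : ∑ i, f i = ∑ i : Subtype p, f i.1 := by
  rw [← Finset.sum_subtype (Finset.univ.filter p) (by simp) f]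
  refine (Finset.sum_subset (Finset.filter_subset _ _) ?_).symm
  intro x _ hx
  exact hf x (by simpa using hx)

lemma quad_subtype (p : V → Prop) [DecidablePred p] (X : Matrix V V ℝ) (z : V → ℝ)
    (hz : ∀ i, ¬ p i → z i = 0) :
    z ⬝ᵥ X *ᵥ z =
      (fun i : Subtype p => z i.1) ⬝ᵥ
        ((X.submatrix (Subtype.val) (Subtype.val)) *ᵥ (fun i : Subtype p => z i.1)) := by
  simp only [dotProduct, mulVec, submatrix_apply, dotProduct]
  rw [sum_restrict p (fun i => z i * ∑ j, X i j * z j)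
      (fun i hi => by simp [hz i hi])]
  refine Finset.sum_congr rfl fun i _ => ?_
  congr 1
  exact sum_restrict p (fun j => X i.1 j * z j) (fun j hj => by simp [hz j hj])

lemma quad_congr_on (p : V → Prop) [DecidablePred p] (X Y : Matrix V V ℝ) (z : V → ℝ)
    (hz : ∀ i, ¬ p i → z i = 0) (hXY : ∀ i j, p i → p j → X i j = Y i j) :
    z ⬝ᵥ X *ᵥ z = z ⬝ᵥ Y *ᵥ z := by
  rw [quad_subtype p X z hz, quad_subtype p Y z hz]
  congr 1
  funext i
  simp only [mulVec, dotProduct, submatrix_apply]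
  refine Finset.sum_congr rfl fun j _ => ?_
  rw [hXY i.1 j.1 i.2 j.2]

lemma ker_perp_solvable (P : Matrix V V ℝ) (hP : P.IsHermitian) (b : V → ℝ)
    (hb : ∀ u : V → ℝ, P *ᵥ u = 0 → b ⬝ᵥ u = 0) : ∃ w : V → ℝ, P *ᵥ w = b := by
  classical
  set B := hP.eigenvectorBasis with hBdef
  set lam := hP.eigenvalues with hlamdef
  set c : V → ℝ := fun j => if lam j = 0 then 0 else (b ⬝ᵥ (B j : V → ℝ)) / lam j with hcdef
  refine ⟨∑ j, c j • (B j : V → ℝ), ?_⟩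
  have hPv : ∀ j, P *ᵥ (B j : V → ℝ) = lam j • (B j : V → ℝ) :=
    fun j => hP.mulVec_eigenvectorBasis j
  have h1 : P *ᵥ (∑ j, c j • (B j : V → ℝ)) = ∑ j, (c j * lam j) • (B j : V → ℝ) := by
    rw [show (P *ᵥ (∑ j, c j • (B j : V → ℝ))) = P.mulVecLin (∑ j, c j • (B j : V → ℝ)) from rfl,
      map_sum]
    refine Finset.sum_congr rfl fun j _ => ?_
    rw [_root_.map_smul, show P.mulVecLin (B j : V → ℝ) = P *ᵥ (B j : V → ℝ) from rfl, hPv j,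
      smul_smul]
  rw [h1]
  have hre : ∀ j, (inner ℝ (B j) (WithLp.toLp 2 b) : ℝ) = b ⬝ᵥ (B j : V → ℝ) := by
    intro j
    simp [PiLp.inner_apply, dotProduct, mul_comm]
  have hrepr := congrArg WithLp.ofLp (B.sum_repr' (WithLp.toLp 2 b))
  have hrepr' : ∑ j, (b ⬝ᵥ (B j : V → ℝ)) • (B j : V → ℝ) = b := by
    calc ∑ j, (b ⬝ᵥ (B j : V → ℝ)) • (B j : V → ℝ)
        = ∑ j, (inner ℝ (B j) (WithLp.toLp 2 b) : ℝ) • (B j : V → ℝ) := by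
          refine Finset.sum_congr rfl fun j _ => by rw [hre j]
      _ = b := by simpa using hrepr
  rw [← hrepr']
  refine Finset.sum_congr rfl fun j _ => ?_
  by_cases h : lam j = 0
  · have hker : P *ᵥ (B j : V → ℝ) = 0 := by rw [hPv j, h, zero_smul]
    rw [hb _ hker]
    simp [hcdef, h]
  · rw [hcdef]
    simp only [if_neg h]
    rw [div_mul_cancel₀ _ h]

lemma self_dot_nonneg (v : V → ℝ) : 0 ≤ v ⬝ᵥ v :=
  Finset.sum_nonneg fun i _ => mul_self_nonneg _

lemma dot_symm_swap (M : Matrix V V ℝ) (hM : M.IsHermitian) (x z : V → ℝ) :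
    x ⬝ᵥ (M *ᵥ z) = (M *ᵥ x) ⬝ᵥ z := by
  have hMt : Mᵀ = M := by
    ext i j
    have := congrFun (congrFun hM i) j
    simpa using this
  rw [dotProduct_mulVec]
  congr 1
  conv_rhs => rw [← hMt]
  exact (mulVec_transpose M x).symm

lemma ext_lemma (Y : Matrix V V ℝ) (hY : Y.PosSemidef) (S : Finset V) (a : ℝ) (b : V → ℝ)
    (hb : ∀ i ∉ S, b i = 0)
    (hstar : ∀ (s : ℝ) (w : V → ℝ), (∀ i ∉ S, w i = 0) →
      0 ≤ a * s ^ 2 + 2 * s * (b ⬝ᵥ w) + w ⬝ᵥ Y *ᵥ w) :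
    ∃ c : V → ℝ, (∀ i ∈ S, c i = b i) ∧
      ∀ (s : ℝ) (w : V → ℝ), 0 ≤ a * s ^ 2 + 2 * s * (c ⬝ᵥ w) + w ⬝ᵥ Y *ᵥ w := by
  classical
  set res : (V → ℝ) → (V → ℝ) := fun w i => if i ∈ S then w i else 0 with hresdef
  have hres_supp : ∀ w, ∀ i ∉ S, res w i = 0 := by
    intro w i hi; simp [hresdef, hi]
  set P : Matrix V V ℝ :=
    Matrix.of (fun i j => if i ∈ S then (if j ∈ S then Y i j else 0) else 0) with hPdef
  have hPmul : ∀ w i, (P *ᵥ w) i = if i ∈ S then (Y *ᵥ res w) i else 0 := by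
    intro w i
    simp only [mulVec, dotProduct, hPdef, Matrix.of_apply, hresdef]
    by_cases hi : i ∈ S
    · simp only [hi, if_true]
      refine Finset.sum_congr rfl fun j _ => ?_
      by_cases hj : j ∈ S <;> simp [hj]
    · simp [hi]
  have hPdot : ∀ u w, u ⬝ᵥ (P *ᵥ w) = (res u) ⬝ᵥ (Y *ᵥ res w) := by
    intro u w
    simp only [dotProduct]
    refine Finset.sum_congr rfl fun i _ => ?_
    rw [hPmul]
    by_cases hi : i ∈ S <;> simp [hresdef, hi]
  have hYsymm : ∀ i j, Y j i = Y i j := by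
    intro i j
    have := congrFun (congrFun hY.1 i) j
    simpa using this
  have hPsymm : P.IsHermitian := by
    ext i j
    simp only [conjTranspose_apply, hPdef, Matrix.of_apply, star_trivial]
    by_cases hi : i ∈ S <;> by_cases hj : j ∈ S <;> simp [hi, hj, hYsymm i j]
  have hker : ∀ u, P *ᵥ u = 0 → b ⬝ᵥ u = 0 := by
    intro u hu
    have hq : (res u) ⬝ᵥ (Y *ᵥ res u) = 0 := by
      rw [← hPdot u u, hu, dotProduct_zero]
    have key : ∀ r : ℝ, 0 ≤ a + 2 * r * (b ⬝ᵥ res u) := by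
      intro r
      have h := hstar 1 (r • res u) (fun i hi => by simp [hres_supp u i hi])
      have e1 : b ⬝ᵥ (r • res u) = r * (b ⬝ᵥ res u) := by
        rw [dotProduct_smul]; simp [smul_eq_mul]
      have e2 : (r • res u) ⬝ᵥ Y *ᵥ (r • res u) = r * r * ((res u) ⬝ᵥ (Y *ᵥ res u)) := by
        rw [mulVec_smul, dotProduct_smul, smul_dotProduct]
        simp [smul_eq_mul]; ring
      rw [e1, e2, hq] at h
      have h' := h
      ring_nf at h' ⊢
      linarith [h']
    have hbu0 : b ⬝ᵥ res u = 0 := by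
      by_contra hne
      have h := key (-(a + 1) / (2 * (b ⬝ᵥ res u)))
      rw [show 2 * (-(a + 1) / (2 * (b ⬝ᵥ res u))) * (b ⬝ᵥ res u) = -(a+1) by
        field_simp] at h
      linarith
    calc b ⬝ᵥ u = b ⬝ᵥ res u := by
          simp only [dotProduct]
          refine Finset.sum_congr rfl fun i _ => ?_
          by_cases hi : i ∈ S <;> simp [hresdef, hi, hb i]
      _ = 0 := hbu0
  obtain ⟨w0, hw0⟩ := ker_perp_solvable P hPsymm b hker
  set u0 : V → ℝ := res w0 with hu0def
  set c : V → ℝ := Y *ᵥ u0 with hcdef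
  have hcS : ∀ i ∈ S, c i = b i := by
    intro i hi
    have h := congrFun hw0 i
    rw [hPmul w0 i, if_pos hi] at h
    exact h
  have hbw0 : b ⬝ᵥ w0 = b ⬝ᵥ u0 := by
    simp only [dotProduct]
    refine Finset.sum_congr rfl fun i _ => ?_
    by_cases hi : i ∈ S <;> simp [hu0def, hresdef, hi, hb i]
  set β := b ⬝ᵥ u0 with hβdef
  have hquad0 : u0 ⬝ᵥ (Y *ᵥ u0) = β := by
    have h1 := hPdot w0 w0
    rw [hw0, dotProduct_comm w0 b, hbw0] at h1
    exact h1.symm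
  have hβa : β ≤ a := by
    have h := hstar 1 (-u0) (fun i hi => by simp [hu0def, hres_supp w0 i hi])
    have e1 : b ⬝ᵥ (-u0) = -β := by rw [dotProduct_neg, hβdef]
    have e2 : (-u0) ⬝ᵥ Y *ᵥ (-u0) = β := by
      rw [mulVec_neg, dotProduct_neg, neg_dotProduct, neg_neg, hquad0]
    rw [e1, e2] at h
    nlinarith [h]
  open MatrixOrder in
  set A := CFC.sqrt Y with hAdef
  open MatrixOrder in
  have hAA : A * A = Y := CFC.sqrt_mul_sqrt_self Y (nonneg_iff_posSemidef.mpr hY)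
  open MatrixOrder in
  have hAh : A.IsHermitian := (nonneg_iff_posSemidef.mp (CFC.sqrt_nonneg Y)).1
  set y := A *ᵥ u0 with hydef
  have hyy : y ⬝ᵥ y = β := by
    rw [hydef, ← dot_symm_swap A hAh u0 (A *ᵥ u0), mulVec_mulVec, hAA, hquad0]
  have hcdot : ∀ w, c ⬝ᵥ w = y ⬝ᵥ (A *ᵥ w) := by
    intro w
    rw [hcdef, ← dot_symm_swap Y hY.1 u0 w, ← hAA, ← mulVec_mulVec,
      dot_symm_swap A hAh u0 (A *ᵥ w), hydef]
  refine ⟨c, hcS, ?_⟩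
  intro s w
  have hwq : w ⬝ᵥ (Y *ᵥ w) = (A *ᵥ w) ⬝ᵥ (A *ᵥ w) := by
    rw [← hAA, ← mulVec_mulVec, dot_symm_swap A hAh w (A *ᵥ w)]
  have hself := self_dot_nonneg (A *ᵥ w + s • y)
  have hexp : (A *ᵥ w + s • y) ⬝ᵥ (A *ᵥ w + s • y)
      = (A *ᵥ w) ⬝ᵥ (A *ᵥ w) + 2 * s * (y ⬝ᵥ (A *ᵥ w)) + s ^ 2 * β := by
    rw [add_dotProduct, dotProduct_add, dotProduct_add, smul_dotProduct, dotProduct_smul,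
      smul_dotProduct, dotProduct_smul, dotProduct_comm (A *ᵥ w) y]
    simp only [smul_eq_mul]
    rw [hyy]
    ring
  have hfin : a * s ^ 2 + 2 * s * (c ⬝ᵥ w) + w ⬝ᵥ Y *ᵥ w
      = (A *ᵥ w + s • y) ⬝ᵥ (A *ᵥ w + s • y) + (a - β) * s ^ 2 := by
    rw [hcdot w, hwq, hexp]; ring
  have h2 : 0 ≤ (a - β) * s ^ 2 := mul_nonneg (by linarith) (sq_nonneg s)
  rw [hfin]
  linarith


lemma sum_split (v : V) (f : V → ℝ) :
    ∑ i, f i = f v + ∑ i : {w : V // w ≠ v}, f i.1 := by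
  rw [← Finset.add_sum_erase _ f (Finset.mem_univ v)]
  congr 1
  exact Finset.sum_subtype (Finset.univ.erase v) (fun x => by simp) f

lemma quad_split (v : V) (M : Matrix V V ℝ) (hM : ∀ i, M i v = M v i) (z : V → ℝ) :
    z ⬝ᵥ M *ᵥ z = M v v * z v ^ 2
      + 2 * z v * (∑ i : {w : V // w ≠ v}, M v i.1 * z i.1)
      + (fun i : {w : V // w ≠ v} => z i.1) ⬝ᵥ
          ((M.submatrix Subtype.val Subtype.val) *ᵥ (fun i : {w : V // w ≠ v} => z i.1)) := by
  simp only [dotProduct, mulVec, submatrix_apply]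
  rw [sum_split v (fun i => z i * ∑ j, M i j * z j)]
  have hin : ∀ i, (∑ j, M i j * z j) = M i v * z v + ∑ j : {w : V // w ≠ v}, M i j.1 * z j.1 :=
    fun i => sum_split v (fun j => M i j * z j)
  rw [hin v]
  have h2 : (∑ i : {w : V // w ≠ v}, z i.1 * ∑ j, M i.1 j * z j)
      = ∑ i : {w : V // w ≠ v}, (z i.1 * (M v i.1 * z v)
          + z i.1 * ∑ j : {w : V // w ≠ v}, M i.1 j.1 * z j.1) := by
    refine Finset.sum_congr rfl fun i _ => ?_
    rw [hin i.1, mul_add, hM i.1]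
  rw [h2, Finset.sum_add_distrib]
  have h3 : (∑ i : {w : V // w ≠ v}, z i.1 * (M v i.1 * z v))
      = (∑ i : {w : V // w ≠ v}, M v i.1 * z i.1) * z v := by
    rw [Finset.sum_mul]
    exact Finset.sum_congr rfl fun i _ => by ring
  rw [h3]
  ring

lemma exists_max_clique (G : SimpleGraph V) (C : Finset V) (hC : G.IsClique (C : Set V)) :
    ∃ D, G.IsMaximalClique D ∧ C ⊆ D := by
  classical
  set F : Finset (Finset V) := Finset.univ.filter (fun D => G.IsClique (D : Set V) ∧ C ⊆ D)
    with hFdef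
  have hne : F.Nonempty := ⟨C, by simp [hFdef, hC]⟩
  obtain ⟨D, hDF, hDmax⟩ := F.exists_max_image Finset.card hne
  rw [hFdef, Finset.mem_filter] at hDF
  refine ⟨D, ⟨hDF.2.1, ?_⟩, hDF.2.2⟩
  intro D' hD' hsub
  have hmem : D' ∈ F := by
    rw [hFdef, Finset.mem_filter]
    exact ⟨Finset.mem_univ _, hD', hDF.2.2.trans hsub⟩
  exact Finset.eq_of_subset_of_card_le hsub (hDmax D' hmem)

lemma chordal_comap {W : Type} {G : SimpleGraph V} (f : W → V) (hf : Function.Injective f)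
    (hG : G.IsChordal) : (G.comap f).IsChordal := by
  intro k v hinj hadj
  obtain ⟨i, j, h1, h2, h3, h4⟩ := hG k (fun i => f (v i))
    (fun a b h => hinj (hf h))
    (fun i => hadj i)
  exact ⟨i, j, h1, h2, h3, h4⟩


def Simplicial (v : V) : Prop :=
  ∀ x y, G.Adj v x → G.Adj v y → x ≠ y → G.Adj x y

def Reach (S : Finset V) (x z : V) : Prop :=
  Relation.ReflTransGen (fun p q => G.Adj p q ∧ q ∉ S) x z

lemma reach_mem {S : Finset V} {x z : V} (hx : x ∉ S) (h : Reach G S x z) : z ∉ S := by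
  induction h with
  | refl => exact hx
  | tail _ hq ih => exact hq.2

lemma reach_symm {S : Finset V} {x z : V} (hx : x ∉ S) (h : Reach G S x z) :
    Reach G S z x := by
  induction h with
  | refl => exact Relation.ReflTransGen.refl
  | @tail c d hp hq ih =>
    exact Relation.ReflTransGen.head ⟨hq.1.symm, reach_mem G hx hp⟩ ih

lemma reach_adj {S : Finset V} {x z w : V} (h : Reach G S x z) (ha : G.Adj z w)
    (hw : w ∉ S) : Reach G S x w :=
  Relation.ReflTransGen.tail h ⟨ha, hw⟩

/-- A walk of length `L` from `x` to `y` whose interior vertices lie in `A`. -/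
def IsWalk' (A : Set V) (x y : V) (L : ℕ) (p : ℕ → V) : Prop :=
  p 0 = x ∧ p L = y ∧ (∀ i < L, G.Adj (p i) (p (i + 1))) ∧
    (∀ i, 0 < i → i < L → p i ∈ A)

lemma walk_of_rtg (A : Set V) {x y : V}
    (h : Relation.ReflTransGen (fun p q => G.Adj p q ∧ q ∈ A) x y) :
    ∃ (L : ℕ) (p : ℕ → V), (p 0 = x ∧ p L = y ∧ (∀ i < L, G.Adj (p i) (p (i + 1))) ∧
      (∀ i, 0 < i → i ≤ L → p i ∈ A)) := by
  induction h with
  | refl => exact ⟨0, fun _ => x, rfl, rfl, by omega, by omega⟩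
  | @tail c d hp hq ih =>
    obtain ⟨L, p, h0, hL, hadj, hmem⟩ := ih
    refine ⟨L + 1, fun k => if k ≤ L then p k else d, by simp [h0], by simp, ?_, ?_⟩
    · intro i hi
      rcases Nat.lt_or_ge i L with h | h
      · simpa [Nat.le_of_lt h, Nat.succ_le_of_lt h] using hadj i h
      · have : i = L := by omega
        subst this
        simpa [hL] using hq.1
    · intro i h0i hiL
      rcases Nat.lt_or_ge L i with h | h
      · have : i = L + 1 := by omega
        subst this
        simpa using hq.2
      · simpa [h] using hmem i h0i h



lemma exists_min_walk (A : Set V) (s t : V) (hst : s ≠ t) (hadj : ¬ G.Adj s t)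
    (hex : ∃ (L : ℕ) (p : ℕ → V), IsWalk' G A s t L p) :
    ∃ (L : ℕ) (p : ℕ → V), IsWalk' G A s t L p ∧ 2 ≤ L ∧
      (∀ i j, i < j → j ≤ L → p i ≠ p j) ∧
      (∀ i j, i + 2 ≤ j → j ≤ L → ¬ G.Adj (p i) (p j)) := by
  classical
  set Ls : Set ℕ := {L | ∃ p : ℕ → V, IsWalk' G A s t L p} with hLs
  have hne : Ls.Nonempty := by
    obtain ⟨L, p, hp⟩ := hex
    exact ⟨L, p, hp⟩
  set L := sInf Ls with hLdef
  obtain ⟨p, hp⟩ : ∃ p : ℕ → V, IsWalk' G A s t L p := Nat.sInf_mem hne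
  obtain ⟨h0, hL, hadjp, hmem⟩ := hp
  have hmin : ∀ L' p', IsWalk' G A s t L' p' → L ≤ L' := by
    intro L' p' h'
    exact Nat.sInf_le ⟨p', h'⟩
  have hL1 : 1 ≤ L := by
    rcases Nat.eq_zero_or_pos L with h | h
    · exact absurd (h0.symm.trans (by rw [← hL, h])) hst
    · exact h
  have hL2 : 2 ≤ L := by
    rcases Nat.lt_or_ge L 2 with h | h
    · have h1 : L = 1 := by omega
      have ha := hadjp 0 (by omega)
      rw [h0, show (0 + 1) = L by omega, hL] at ha
      exact absurd ha hadj
    · exact h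
  have hinj : ∀ i j, i < j → j ≤ L → p i ≠ p j := by
    intro i j hij hjL heq
    by_cases hext : i = 0 ∧ j = L
    · rw [hext.1, hext.2, h0, hL] at heq
      exact hst heq
    · -- shortcut: remove the loop between i and j
      set q : ℕ → V := fun k => if k ≤ i then p k else p (k + (j - i)) with hq
      set L2 := L - (j - i) with hL2def
      have hiL2 : i ≤ L2 := by omega
      have hwalk : IsWalk' G A s t L2 q := by
        refine ⟨by simp [hq, h0], ?_, ?_, ?_⟩
        · by_cases hjlt : j = L
          · have : L2 = i := by omega
            rw [this]
            simp only [hq, le_refl, if_pos]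
            rw [heq, hjlt, hL]
          · have hgt : ¬ (L2 ≤ i) := by omega
            simp only [hq, if_neg hgt]
            rw [show L2 + (j - i) = L by omega, hL]
        · intro k hk
          by_cases hk1 : k + 1 ≤ i
          · simpa [hq, hk1, Nat.le_of_succ_le hk1] using hadjp k (by omega)
          · by_cases hk2 : k ≤ i
            · have hki : k = i := by omega
              have hjlt : j < L := by omega
              have := hadjp j hjlt
              simp only [hq, hk2, if_pos, if_neg hk1]
              rw [hki, heq, show i + 1 + (j - i) = j + 1 by omega]
              exact this
            · have := hadjp (k + (j - i)) (by omega)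
              simpa [hq, hk2, hk1, show k + 1 + (j - i) = k + (j - i) + 1 by omega] using this
        · intro k hk0 hkL2
          by_cases hk2 : k ≤ i
          · simp only [hq, hk2, if_pos]
            exact hmem k hk0 (by omega)
          · simp only [hq, if_neg hk2]
            exact hmem (k + (j - i)) (by omega) (by omega)
      have := hmin L2 q hwalk
      omega
  refine ⟨L, p, ⟨h0, hL, hadjp, hmem⟩, hL2, hinj, ?_⟩
  intro i j hij hjL hchord
  -- shortcut using the chord
  set q : ℕ → V := fun k => if k ≤ i then p k else p (k + (j - i - 1)) with hq
  set L2 := L - (j - i - 1) with hL2def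
  have hwalk : IsWalk' G A s t L2 q := by
    refine ⟨by simp [hq, h0], ?_, ?_, ?_⟩
    · have hgt : ¬ (L2 ≤ i) := by omega
      simp only [hq, if_neg hgt]
      rw [show L2 + (j - i - 1) = L by omega, hL]
    · intro k hk
      by_cases hk1 : k + 1 ≤ i
      · simpa [hq, hk1, Nat.le_of_succ_le hk1] using hadjp k (by omega)
      · by_cases hk2 : k ≤ i
        · have hki : k = i := by omega
          simp only [hq, hk2, if_pos, if_neg hk1]
          rw [hki, show i + 1 + (j - i - 1) = j by omega]
          exact hchord
        · have := hadjp (k + (j - i - 1)) (by omega)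
          simpa [hq, hk2, hk1, show k + 1 + (j - i - 1) = k + (j - i - 1) + 1 by omega] using this
    · intro k hk0 hkL2
      by_cases hk2 : k ≤ i
      · simp only [hq, hk2, if_pos]
        exact hmem k hk0 (by omega)
      · simp only [hq, if_neg hk2]
        exact hmem (k + (j - i - 1)) (by omega) (by omega)
  have := hmin L2 q hwalk
  omega



lemma no_double_path (hG : G.IsChordal) (s t : V) (hst : s ≠ t) (hadj : ¬ G.Adj s t)
    (A B : Set V)
    (hsepAB : ∀ a ∈ A, ∀ b ∈ B, ¬ G.Adj a b)
    (hdisj : ∀ z, z ∈ A → z ∈ B → False)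
    (hsB : s ∉ B) (htB : t ∉ B)
    (Lp Lq : ℕ) (p q : ℕ → V) (hp : IsWalk' G A s t Lp p) (hq : IsWalk' G B s t Lq q)
    (hLp : 2 ≤ Lp) (hLq : 2 ≤ Lq)
    (hpinj : ∀ i j, i < j → j ≤ Lp → p i ≠ p j)
    (hpch : ∀ i j, i + 2 ≤ j → j ≤ Lp → ¬ G.Adj (p i) (p j))
    (hqinj : ∀ i j, i < j → j ≤ Lq → q i ≠ q j)
    (hqch : ∀ i j, i + 2 ≤ j → j ≤ Lq → ¬ G.Adj (q i) (q j)) : False := by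
  obtain ⟨hp0, hpL, hpadj, hpmem⟩ := hp
  obtain ⟨hq0, hqL, hqadj, hqmem⟩ := hq
  set n := Lp + Lq with hn
  set cyc : ℕ → V := fun m => if m ≤ Lp then p m else q (n - m) with hcyc
  have hc_p : ∀ m, m ≤ Lp → cyc m = p m := fun m hm => by simp [hcyc, hm]
  have hc_q : ∀ m, Lp ≤ m → m ≤ n → cyc m = q (n - m) := by
    intro m h1 h2
    rcases Nat.eq_or_lt_of_le h1 with h | h
    · rw [← h, hc_p Lp le_rfl, hpL, show n - Lp = Lq by omega, hqL]
    · simp [hcyc, Nat.not_le_of_lt h]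
  have hadjc : ∀ m, m + 1 < n → G.Adj (cyc m) (cyc (m + 1)) := by
    intro m hm
    rcases Nat.lt_or_ge m Lp with h | h
    · rw [hc_p m (by omega), hc_p (m + 1) (by omega)]
      exact hpadj m h
    · rw [hc_q m h (by omega), hc_q (m + 1) (by omega) (by omega)]
      have := hqadj (n - (m + 1)) (by omega)
      rw [show n - (m + 1) + 1 = n - m by omega] at this
      exact this.symm
  have hwrap : G.Adj (cyc (n - 1)) (cyc 0) := by
    rw [hc_q (n - 1) (by omega) (by omega), hc_p 0 (by omega), hp0, ← hq0,
      show n - (n - 1) = 1 by omega]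
    exact (hqadj 0 (by omega)).symm
  have hinjc : ∀ m m', m < m' → m' < n → cyc m ≠ cyc m' := by
    intro m m' hmm hm'n
    rcases le_or_gt m' Lp with h | h
    · rw [hc_p m (by omega), hc_p m' h]
      exact hpinj m m' hmm h
    · rcases le_or_gt Lp m with h2 | h2
      · -- both in q part
        rw [hc_q m (by omega) (by omega), hc_q m' (by omega) (by omega)]
        have := hqinj (n - m') (n - m) (by omega) (by omega)
        exact fun heq => this heq.symm
      · rcases Nat.eq_zero_or_pos m with h4 | h4
        · -- m = 0 : s vs interior of q
          subst h4
          rw [hc_p 0 (by omega), hp0, hc_q m' (by omega) (by omega)]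
          intro heq
          exact hsB (heq ▸ hqmem (n - m') (by omega) (by omega))
        · -- interior of p vs interior of q
          rw [hc_p m (by omega), hc_q m' (by omega) (by omega)]
          intro heq
          exact hdisj _ (hpmem m h4 h2) (heq ▸ hqmem (n - m') (by omega) (by omega))
  have hchc : ∀ m m', m + 2 ≤ m' → m' < n → ¬ (m = 0 ∧ m' = n - 1) →
      ¬ G.Adj (cyc m) (cyc m') := by
    intro m m' hmm hm'n hnw
    rcases le_or_gt m' Lp with h | h
    · rw [hc_p m (by omega), hc_p m' h]
      exact hpch m m' hmm h
    · rcases le_or_gt Lp m with h2 | h2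
      · rw [hc_q m (by omega) (by omega), hc_q m' (by omega) (by omega)]
        intro ha
        exact hqch (n - m') (n - m) (by omega) (by omega) ha.symm
      · rcases Nat.eq_zero_or_pos m with h4 | h4
        · subst h4
          rw [hc_p 0 (by omega), hp0, ← hq0, hc_q m' (by omega) (by omega)]
          have hm' : m' ≠ n - 1 := fun hh => hnw ⟨rfl, hh⟩
          exact hqch 0 (n - m') (by omega) (by omega)
        · rw [hc_p m (by omega), hc_q m' (by omega) (by omega)]
          exact hsepAB _ (hpmem m h4 h2) _ (hqmem (n - m') (by omega) (by omega))
  -- build the cycle for chordality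
  set k := n - 4 with hk
  have hkn : k + 4 = n := by omega
  set v : Fin (k + 4) → V := fun i => cyc i.1 with hv
  have hvinj : Function.Injective v := by
    intro i j hij
    by_contra hne
    have hvals : i.1 ≠ j.1 := fun h => hne (Fin.ext h)
    rcases Nat.lt_or_ge i.1 j.1 with h | h
    · exact hinjc i.1 j.1 h (by omega) hij
    · exact hinjc j.1 i.1 (by omega) (by omega) hij.symm
  have hvadj : ∀ i : Fin (k + 4), G.Adj (v i) (v (i + 1)) := by
    intro i
    by_cases hlast : i = Fin.last (k + 3)
    · have h1 : (i + 1 : Fin (k + 4)).1 = 0 := by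
        rw [hlast]
        simp
      have h2 : i.1 = n - 1 := by rw [hlast]; simp [Fin.last]; omega
      rw [hv]
      simp only []
      rw [h1, h2]
      exact hwrap
    · have h1 : (i + 1 : Fin (k + 4)).1 = i.1 + 1 := by
        rw [Fin.val_add_one]
        simp [hlast]
      rw [hv]
      simp only []
      rw [h1]
      exact hadjc i.1 (by
        have : i.1 < k + 3 := by
          have := Fin.val_lt_last hlast
          simpa [Fin.last] using this
        omega)
  obtain ⟨i, j, hij, hji1, hij1, hA⟩ := hG k v hvinj hvadj
  have claim : ∀ (i j : Fin (k + 4)), i.1 < j.1 → j ≠ i + 1 → i ≠ j + 1 →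
      G.Adj (v i) (v j) → False := by
    intro i j hlt hj1 hi1 hadj'
    have hb1 : j.1 ≠ i.1 + 1 := by
      intro h
      apply hj1
      apply Fin.ext
      rw [Fin.val_add_one]
      have : i ≠ Fin.last (k + 3) := by
        intro hh
        rw [hh] at hlt
        simp [Fin.last] at hlt
        omega
      simp [this, ← h]
    have hnw : ¬ (i.1 = 0 ∧ j.1 = k + 3) := by
      rintro ⟨hi0, hjl⟩
      apply hi1
      apply Fin.ext
      have hjlast : j = Fin.last (k + 3) := Fin.ext (by simpa [Fin.last] using hjl)
      rw [hjlast]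
      simp [hi0]
    exact hchc i.1 j.1 (by omega) (by omega) (by omega) hadj'
  rcases lt_trichotomy i.1 j.1 with h | h | h
  · exact claim i j h hji1 hij1 hA
  · exact hij (Fin.ext h)
  · exact claim j i h (by intro hh; exact hij1 hh) (fun hh => hji1 hh) hA.symm

lemma chordal_induce {G : SimpleGraph V} (hG : G.IsChordal) (s : Set V) :
    (G.induce s).IsChordal := by
  intro k v hinj hadj
  obtain ⟨i, j, h1, h2, h3, h4⟩ := hG k (fun i => (v i : V))
    (fun a b h => hinj (Subtype.val_injective h))
    (fun i => by simpa using hadj i)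
  exact ⟨i, j, h1, h2, h3, by simpa using h4⟩
-- walk assembly: join s -- (walk inside A) -- t
lemma walk_join (A : Set V) (s t a1 a2 : V)
    (ha1 : a1 ∈ A) (hsa : G.Adj s a1) (hat : G.Adj a2 t)
    (h : Relation.ReflTransGen (fun p q => G.Adj p q ∧ q ∈ A) a1 a2) :
    ∃ (L : ℕ) (p : ℕ → V), IsWalk' G A s t L p := by
  obtain ⟨L0, p0, h0, hL0, hadj0, hmem0⟩ := walk_of_rtg G A h
  refine ⟨L0 + 2, fun k => if k = 0 then s else if k ≤ L0 + 1 then p0 (k - 1) else t,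
    by simp, by simp [show ¬(L0 + 2 = 0) by omega, show ¬(L0 + 2 ≤ L0 + 1) by omega], ?_, ?_⟩
  · intro i hi
    rcases Nat.eq_zero_or_pos i with h1 | h1
    · subst h1
      simpa [h0] using hsa
    · rcases Nat.lt_or_ge i (L0 + 1) with h2 | h2
      · have e1 : ¬ (i = 0) := by omega
        have e2 : i ≤ L0 + 1 := by omega
        have e3 : ¬ (i + 1 = 0) := by omega
        have e4 : i + 1 ≤ L0 + 1 := by omega
        simp only [if_neg e1, if_pos e2, if_neg e3, if_pos e4]
        have := hadj0 (i - 1) (by omega)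
        rwa [show i - 1 + 1 = i + 1 - 1 by omega] at this
      · have e : i = L0 + 1 := by omega
        subst e
        have e1 : ¬ (L0 + 1 = 0) := by omega
        have e4 : ¬ (L0 + 1 + 1 ≤ L0 + 1) := by omega
        simp only [if_neg e1, le_refl, if_pos, if_neg e4]
        rw [show L0 + 1 - 1 = L0 by omega, hL0]
        exact hat
  · intro i h1 h2
    have e1 : ¬ (i = 0) := by omega
    have e2 : i ≤ L0 + 1 := by omega
    simp only [if_neg e1, if_pos e2]
    rcases Nat.eq_or_lt_of_le (show 1 ≤ i by omega) with h3 | h3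
    · rw [show i - 1 = 0 by omega, h0]
      exact ha1
    · exact hmem0 (i - 1) (by omega) (by omega)

lemma rtgA_mem {A : Set V} {u w : V}
    (h : Relation.ReflTransGen (fun p q => G.Adj p q ∧ q ∈ A) u w) (hu : u ∈ A) : w ∈ A := by
  induction h with
  | refl => exact hu
  | tail _ hq ih => exact hq.2

lemma rtgA_symm {A : Set V} {u w : V}
    (h : Relation.ReflTransGen (fun p q => G.Adj p q ∧ q ∈ A) u w) (hu : u ∈ A) :
    Relation.ReflTransGen (fun p q => G.Adj p q ∧ q ∈ A) w u := by
  induction h with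
  | refl => exact Relation.ReflTransGen.refl
  | @tail c d hp hq ih =>
    exact Relation.ReflTransGen.head ⟨hq.1.symm, rtgA_mem G hp hu⟩ ih

lemma reach_to_rtgA {S : Finset V} {x z : V} (h : Reach G S x z) :
    Relation.ReflTransGen (fun p q => G.Adj p q ∧ q ∈ {w | Reach G S x w}) x z := by
  induction h with
  | refl => exact Relation.ReflTransGen.refl
  | @tail c d hp hq ih =>
    exact Relation.ReflTransGen.tail ih ⟨hq.1, Relation.ReflTransGen.tail hp hq⟩

lemma reach_split {S : Finset V} {s x z : V} (h : Reach G (S.erase s) x z) :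
    Reach G S x z ∨ ∃ p, Reach G S x p ∧ G.Adj p s := by
  induction h with
  | refl => exact Or.inl Relation.ReflTransGen.refl
  | @tail c d hp hq ih =>
    rcases ih with hc | hc
    · by_cases hd : d ∈ S
      · have : d = s := by
          by_contra hne
          exact hq.2 (Finset.mem_erase.mpr ⟨hne, hd⟩)
        exact Or.inr ⟨c, hc, this ▸ hq.1⟩
      · exact Or.inl (Relation.ReflTransGen.tail hc ⟨hq.1, hd⟩)
    · exact Or.inr hc


theorem dirac_aux (N : ℕ) :
    ∀ (V : Type) [Fintype V] [DecidableEq V] (G : SimpleGraph V),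
      Fintype.card V ≤ N → G.IsChordal →
      (∀ u w : V, u ≠ w → G.Adj u w) ∨
        (∃ a b : V, a ≠ b ∧ ¬ G.Adj a b ∧ Simplicial G a ∧ Simplicial G b) := by
  induction N with
  | zero =>
    intro V _ _ G hc hG
    left
    intro u w hne
    have : 0 < Fintype.card V := Fintype.card_pos_iff.mpr ⟨u⟩
    omega
  | succ N ih =>
    intro V _ _ G hc hG
    classical
    by_cases hcomp : ∀ u w : V, u ≠ w → G.Adj u w
    · exact Or.inl hcomp
    right
    push_neg at hcomp
    obtain ⟨x, y, hxy, hnadj⟩ := hcomp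
    set F : Set (Finset V) := {S | x ∉ S ∧ y ∉ S ∧ ¬ Reach G S x y} with hF
    have hFne : F.Nonempty := by
      refine ⟨Finset.univ.filter (fun z => G.Adj x z), ?_, ?_, ?_⟩
      · simp
      · simp [hnadj]
      · intro h
        rcases h.cases_head with h | ⟨c, hc, _⟩
        · exact hxy h
        · exact hc.2 (by simp [hc.1])
    have hmin_ex : ∃ S ∈ F, ∀ S' ∈ F, S.card ≤ S'.card := by
      have h1 : (Finset.card '' F).Nonempty := hFne.image _
      obtain ⟨S, hSF, heq⟩ := Nat.sInf_mem h1
      exact ⟨S, hSF, fun S' h' => heq ▸ Nat.sInf_le ⟨S', h', rfl⟩⟩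
    obtain ⟨S, hSF, hSmin⟩ := hmin_ex
    obtain ⟨hxS, hyS, hsep⟩ := hSF
    set A : Set V := {z | Reach G S x z} with hA
    set B : Set V := {z | Reach G S y z} with hB
    have hxA : x ∈ A := Relation.ReflTransGen.refl
    have hyB : y ∈ B := Relation.ReflTransGen.refl
    have hAS : ∀ z ∈ A, z ∉ S := fun z hz => reach_mem G hxS hz
    have hBS : ∀ z ∈ B, z ∉ S := fun z hz => reach_mem G hyS hz
    have hdisj : ∀ z, z ∈ A → z ∈ B → False := fun z hzA hzB =>
      hsep (Relation.ReflTransGen.trans hzA (reach_symm G hyS hzB))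
    have hsepAB : ∀ a ∈ A, ∀ b ∈ B, ¬ G.Adj a b := by
      intro a ha b hb hab
      exact hdisj b (reach_adj G ha hab (hBS b hb)) hb
    have hyA : y ∉ A := fun h => hsep h
    have hxB : x ∉ B := fun h => hsep (reach_symm G hyS h)
    have hkey : ∀ s ∈ S, (∃ a ∈ A, G.Adj a s) ∧ (∃ b ∈ B, G.Adj b s) := by
      intro s hs
      have hcard : (S.erase s).card < S.card := Finset.card_erase_lt_of_mem hs
      have hnotF : (S.erase s) ∉ F := fun h => absurd (hSmin _ h) (by omega)
      have hreach : Reach G (S.erase s) x y := by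
        by_contra h
        exact hnotF ⟨fun hh => hxS (Finset.mem_of_mem_erase hh),
          fun hh => hyS (Finset.mem_of_mem_erase hh), h⟩
      constructor
      · rcases reach_split G hreach with h | ⟨p, hp, hps⟩
        · exact absurd h hsep
        · exact ⟨p, hp, hps⟩
      · have hreach' : Reach G (S.erase s) y x :=
          reach_symm G (fun hh => hxS (Finset.mem_of_mem_erase hh)) hreach
        rcases reach_split G hreach' with h | ⟨p, hp, hps⟩
        · exact absurd (reach_symm G hyS h) hsep
        · exact ⟨p, hp, hps⟩
    have hSclique : ∀ s ∈ S, ∀ t ∈ S, s ≠ t → G.Adj s t := by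
      intro s hs t ht hst
      by_contra hnadj'
      obtain ⟨⟨a1, ha1, ha1s⟩, ⟨b1, hb1, hb1s⟩⟩ := hkey s hs
      obtain ⟨⟨a2, ha2, ha2t⟩, ⟨b2, hb2, hb2t⟩⟩ := hkey t ht
      have hwA : ∃ (L : ℕ) (p : ℕ → V), IsWalk' G A s t L p := by
        refine walk_join G A s t a1 a2 ha1 ha1s.symm ha2t ?_
        exact Relation.ReflTransGen.trans
          (rtgA_symm G (reach_to_rtgA G ha1) hxA) (reach_to_rtgA G ha2)
      have hwB : ∃ (L : ℕ) (p : ℕ → V), IsWalk' G B s t L p := by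
        refine walk_join G B s t b1 b2 hb1 hb1s.symm hb2t ?_
        exact Relation.ReflTransGen.trans
          (rtgA_symm G (reach_to_rtgA G hb1) hyB) (reach_to_rtgA G hb2)
      obtain ⟨LA, pA, hpA, hLA2, hpAinj, hpAch⟩ := exists_min_walk G A s t hst hnadj' hwA
      obtain ⟨LB, pB, hpB, hLB2, hpBinj, hpBch⟩ := exists_min_walk G B s t hst hnadj' hwB
      exact no_double_path G hG s t hst hnadj' A B hsepAB hdisj
        (fun h => hBS s h hs) (fun h => hBS t h ht)
        LA LB pA pB hpA hpB hLA2 hLB2 hpAinj hpAch hpBinj hpBch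
    have extract : ∀ (C : Set V) (c0 : V), c0 ∈ C → (∀ z ∈ C, z ∉ S) →
        (∀ z ∈ C, ∀ w, G.Adj z w → w ∉ S → w ∈ C) → (∃ out : V, out ∉ C ∪ ↑S) →
        ∃ z ∈ C, Simplicial G z := by
      intro C c0 hc0 hCS hCcl hex
      obtain ⟨out, hout⟩ := hex
      set W : Set V := C ∪ ↑S with hW
      have hcard' : Fintype.card ↥W ≤ N := by
        have h2 : Fintype.card ↥W < Fintype.card V :=
          Fintype.card_lt_of_injective_of_notMem Subtype.val Subtype.val_injective
            (by simpa using hout)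
        omega
      have hch := chordal_induce hG W
      have hNbr : ∀ z ∈ C, ∀ w, G.Adj z w → w ∈ W := by
        intro z hz w hzw
        by_cases hwS : w ∈ S
        · exact Or.inr hwS
        · exact Or.inl (hCcl z hz w hzw hwS)
      have hstep : ∀ (z : ↥W), (z : V) ∈ C → Simplicial (G.induce W) z →
          ∃ z' ∈ C, Simplicial G z' := by
        intro z hzC hzs
        refine ⟨z, hzC, ?_⟩
        intro u w hu hw hne
        have hu' : u ∈ W := hNbr z hzC u hu
        have hw' : w ∈ W := hNbr z hzC w hw
        have := hzs ⟨u, hu'⟩ ⟨w, hw'⟩ (by simpa using hu) (by simpa using hw)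
          (by simpa using hne)
        simpa using this
      rcases ih ↥W (G.induce W) hcard' hch with hcomp' | ⟨a, b, hne, hnadj2, hsa, hsb⟩
      · refine ⟨c0, hc0, ?_⟩
        intro u w hu hw hne
        have hu' : u ∈ W := hNbr c0 hc0 u hu
        have hw' : w ∈ W := hNbr c0 hc0 w hw
        have := hcomp' ⟨u, hu'⟩ ⟨w, hw'⟩ (by simpa using hne)
        simpa using this
      · have hone : (a : V) ∈ C ∨ (b : V) ∈ C := by
          by_contra hcon
          push_neg at hcon
          have haS : (a : V) ∈ S := by
            rcases a.2 with h | h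
            · exact absurd h hcon.1
            · simpa using h
          have hbS : (b : V) ∈ S := by
            rcases b.2 with h | h
            · exact absurd h hcon.2
            · simpa using h
          have hvne : (a : V) ≠ (b : V) := fun h => hne (Subtype.ext h)
          have := hSclique _ haS _ hbS hvne
          exact hnadj2 (by simpa using this)
        rcases hone with h | h
        · exact hstep a h hsa
        · exact hstep b h hsb
    have hAcl : ∀ z ∈ A, ∀ w, G.Adj z w → w ∉ S → w ∈ A :=
      fun z hz w hzw hwS => reach_adj G hz hzw hwS
    have hBcl : ∀ z ∈ B, ∀ w, G.Adj z w → w ∉ S → w ∈ B :=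
      fun z hz w hzw hwS => reach_adj G hz hzw hwS
    obtain ⟨zA, hzA, hzAs⟩ := extract A x hxA hAS hAcl
      ⟨y, by rintro (h | h); exacts [hyA h, hyS (by simpa using h)]⟩
    obtain ⟨zB, hzB, hzBs⟩ := extract B y hyB hBS hBcl
      ⟨x, by rintro (h | h); exacts [hxB h, hxS (by simpa using h)]⟩
    exact ⟨zA, zB, fun h => hdisj zA hzA (h ▸ hzB), hsepAB zA hzA zB hzB, hzAs, hzBs⟩

lemma exists_simplicial (G : SimpleGraph V) [Nonempty V] (hG : G.IsChordal) :
    ∃ v, Simplicial G v := by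
  rcases dirac_aux (Fintype.card V) V G le_rfl hG with h | ⟨a, _, _, _, ha, _⟩
  · exact ⟨Classical.arbitrary V, fun u w hu hw hne => h u w hne⟩
  · exact ⟨a, ha⟩


theorem main_aux (N : ℕ) :
    ∀ (V : Type) [Fintype V] [DecidableEq V] (G : SimpleGraph V),
      Fintype.card V ≤ N → G.IsChordal →
      ∀ X : Matrix V V ℝ, X.IsSymm →
      (∀ C : Finset V, G.IsClique (C : Set V) →
        ∀ z : V → ℝ, (∀ i ∉ C, z i = 0) → 0 ≤ z ⬝ᵥ X *ᵥ z) →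
      ∃ Y : Matrix V V ℝ, Y.PosSemidef ∧ (∀ i, Y i i = X i i) ∧
        (∀ i j, G.Adj i j → Y i j = X i j) := by
  induction N with
  | zero =>
    intro V _ _ G hc hG X hX hcl
    haveI : IsEmpty V := Fintype.card_eq_zero_iff.mp (by omega)
    exact ⟨0, ⟨Matrix.isHermitian_zero, fun x => by simp⟩,
      fun i => isEmptyElim i, fun i j _ => isEmptyElim i⟩
  | succ N ih =>
    intro V _ _ G hc hG X hX hcl
    classical
    rcases Nat.eq_zero_or_pos (Fintype.card V) with hzero | hpos
    · haveI : IsEmpty V := Fintype.card_eq_zero_iff.mp hzero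
      exact ⟨0, ⟨Matrix.isHermitian_zero, fun x => by simp⟩,
        fun i => isEmptyElim i, fun i j _ => isEmptyElim i⟩
    haveI : Nonempty V := Fintype.card_pos_iff.mp hpos
    obtain ⟨v, hv⟩ := exists_simplicial G hG
    have hXs : ∀ i j, X j i = X i j := by
      intro i j
      have := congrFun (congrFun hX i) j
      simpa using this
    set G' : SimpleGraph {w : V // w ≠ v} := G.comap (Subtype.val) with hG'def
    have hch' : G'.IsChordal := chordal_comap Subtype.val Subtype.val_injective hG
    have hcard' : Fintype.card {w : V // w ≠ v} ≤ N := by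
      have h2 : Fintype.card {w : V // w ≠ v} < Fintype.card V :=
        Fintype.card_lt_of_injective_of_notMem Subtype.val Subtype.val_injective
          (by rintro ⟨⟨w, hw⟩, rfl⟩; exact hw rfl)
      omega
    set X' : Matrix {w : V // w ≠ v} {w : V // w ≠ v} ℝ :=
      X.submatrix Subtype.val Subtype.val with hX'def
    have hX's : X'.IsSymm := by
      show X'ᵀ = X'
      ext i j
      simp only [Matrix.transpose_apply, hX'def, Matrix.submatrix_apply]
      exact hXs i.1 j.1
    have hcl' : ∀ C : Finset {w : V // w ≠ v}, G'.IsClique (C : Set {w : V // w ≠ v}) →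
        ∀ z : {w : V // w ≠ v} → ℝ, (∀ i ∉ C, z i = 0) → 0 ≤ z ⬝ᵥ X' *ᵥ z := by
      intro C hC z hz
      set CV : Finset V := C.image Subtype.val with hCVdef
      have hCVcl : G.IsClique (CV : Set V) := by
        rintro a ha b hb hne
        rw [hCVdef, Finset.coe_image] at ha hb
        obtain ⟨xa, hxa, rfl⟩ := ha
        obtain ⟨xb, hxb, rfl⟩ := hb
        exact hC hxa hxb (fun h => hne (congrArg _ h))
      set zV : V → ℝ := fun i => if h : i = v then 0 else z ⟨i, h⟩ with hzVdef
      have hzV : ∀ i ∉ CV, zV i = 0 := by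
        intro i hi
        by_cases h : i = v
        · simp [hzVdef, h]
        · simp only [hzVdef, dif_neg h]
          refine hz ⟨i, h⟩ (fun hmem => hi ?_)
          rw [hCVdef]
          exact Finset.mem_image_of_mem _ hmem
      have h0 := hcl CV hCVcl zV hzV
      have hquad := quad_subtype (p := fun i => ¬ (i = v)) X zV
        (fun i hi => by simp [hzVdef, not_not.mp hi])
      have hzV' : (fun i : {w : V // ¬ (w = v)} => zV i.1) = z := by
        funext i
        simp only [hzVdef, dif_neg i.2]
      rw [hquad, hzV'] at h0
      exact h0
    obtain ⟨Y', hY'psd, hY'diag, hY'edge⟩ :=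
      ih {w : V // w ≠ v} G' hcard' hch' X' hX's hcl'
    have hY'sym : ∀ p q : {w : V // w ≠ v}, Y' q p = Y' p q := by
      intro p q
      have := congrFun (congrFun hY'psd.1 p) q
      simpa using this
    set S : Finset {w : V // w ≠ v} := Finset.univ.filter (fun w => G.Adj v w.1) with hSdef
    set b : {w : V // w ≠ v} → ℝ := fun w => if G.Adj v w.1 then X w.1 v else 0 with hbdef
    have hbsupp : ∀ w ∉ S, b w = 0 := by
      intro w hw
      have : ¬ G.Adj v w.1 := by simpa [hSdef] using hw
      simp [hbdef, this]
    set K : Finset V := insert v (Finset.univ.filter (fun u => G.Adj v u)) with hKdef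
    have hKcl : G.IsClique (K : Set V) := by
      intro p hp q hq hne
      simp only [hKdef, Finset.coe_insert, Set.mem_insert_iff, Finset.coe_filter,
        Set.mem_setOf_eq, Finset.mem_univ, true_and] at hp hq
      rcases hp with rfl | hp
      · rcases hq with rfl | hq
        · exact absurd rfl hne
        · exact hq
      · rcases hq with rfl | hq
        · exact hp.symm
        · exact hv p q hp hq hne
    have hstar : ∀ (s : ℝ) (w : {w : V // w ≠ v} → ℝ), (∀ i ∉ S, w i = 0) →
        0 ≤ X v v * s ^ 2 + 2 * s * (b ⬝ᵥ w) + w ⬝ᵥ Y' *ᵥ w := by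
      intro s w hwsupp
      set z : V → ℝ := fun i => if h : i = v then s else w ⟨i, h⟩ with hzdef
      have hzsupp : ∀ i ∉ K, z i = 0 := by
        intro i hi
        have hiv : i ≠ v := by rintro rfl; exact hi (by simp [hKdef])
        have hnadj : ¬ G.Adj v i := fun h => hi (by simp [hKdef, h])
        simp only [hzdef, dif_neg hiv]
        exact hwsupp ⟨i, hiv⟩ (by simp [hSdef, hnadj])
      have h0 := hcl K hKcl z hzsupp
      have hsplit := quad_split v X (fun i => hXs v i) z
      rw [hsplit] at h0
      have hzv : z v = s := by simp [hzdef]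
      have hmid : (∑ i : {w : V // w ≠ v}, X v i.1 * z i.1) = b ⬝ᵥ w := by
        rw [dotProduct]
        refine Finset.sum_congr rfl fun i _ => ?_
        simp only [hzdef, dif_neg i.2, hbdef]
        by_cases h : G.Adj v i.1
        · rw [if_pos h, hXs v i.1]
        · rw [if_neg h, zero_mul]
          have hw0 : w i = 0 := hwsupp i (by simp [hSdef, h])
          rw [show w ⟨i.1, i.2⟩ = w i from rfl, hw0, mul_zero]
      have hsub : (fun i : {w : V // w ≠ v} => z i.1) = w := by
        funext i
        simp only [hzdef, dif_neg i.2]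
      have hXY' : w ⬝ᵥ (X.submatrix (Subtype.val : {w : V // w ≠ v} → V) Subtype.val) *ᵥ w
          = w ⬝ᵥ Y' *ᵥ w := by
        refine quad_congr_on (fun i => i ∈ S) _ _ w hwsupp ?_
        intro p q hp hq
        by_cases hpq : p = q
        · subst hpq
          exact (hY'diag p).symm
        · have hadjpq : G.Adj p.1 q.1 := hv p.1 q.1 (by simpa [hSdef] using hp)
            (by simpa [hSdef] using hq) (fun h => hpq (Subtype.ext h))
          exact (hY'edge p q hadjpq).symm
      rw [hzv, hmid, hsub, hXY'] at h0
      exact h0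
    obtain ⟨c, hcS, hcpsd⟩ := ext_lemma Y' hY'psd S (X v v) b hbsupp hstar
    set Y : Matrix V V ℝ := Matrix.of (fun i j =>
      if hi : i = v then (if hj : j = v then X v v else c ⟨j, hj⟩)
      else if hj : j = v then c ⟨i, hi⟩ else Y' ⟨i, hi⟩ ⟨j, hj⟩) with hYdef
    have hYvv : Y v v = X v v := by simp [hYdef]
    have hYvj : ∀ (j : V) (hj : j ≠ v), Y v j = c ⟨j, hj⟩ := by
      intro j hj; simp [hYdef, hj]
    have hYiv : ∀ (i : V) (hi : i ≠ v), Y i v = c ⟨i, hi⟩ := by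
      intro i hi; simp [hYdef, hi]
    have hYij : ∀ (i j : V) (hi : i ≠ v) (hj : j ≠ v), Y i j = Y' ⟨i, hi⟩ ⟨j, hj⟩ := by
      intro i j hi hj; simp [hYdef, hi, hj]
    have hYsymEntry : ∀ i, Y i v = Y v i := by
      intro i
      by_cases hi : i = v
      · subst hi; rfl
      · rw [hYiv i hi, hYvj i hi]
    have hYherm : Y.IsHermitian := by
      ext i j
      simp only [Matrix.conjTranspose_apply, star_trivial]
      by_cases hi : i = v
      · rw [hi]
        exact hYsymEntry j
      · by_cases hj : j = v
        · rw [hj]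
          exact (hYsymEntry i).symm
        · rw [hYij i j hi hj, hYij j i hj hi]
          exact hY'sym ⟨i, hi⟩ ⟨j, hj⟩
    have hYpsd : Y.PosSemidef := by
      refine .of_dotProduct_mulVec_nonneg hYherm ?_
      intro x
      have hstarx : star x = x := by funext i; exact star_trivial _
      rw [hstarx]
      have hsplit := quad_split v Y (fun i => hYsymEntry i) x
      rw [hsplit]
      have hmid : (∑ i : {w : V // w ≠ v}, Y v i.1 * x i.1)
          = c ⬝ᵥ (fun i : {w : V // w ≠ v} => x i.1) := by
        rw [dotProduct]
        refine Finset.sum_congr rfl fun i _ => ?_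
        rw [hYvj i.1 i.2]
      have hsubY : Y.submatrix (Subtype.val : {w : V // w ≠ v} → V) Subtype.val = Y' := by
        ext p q
        rw [Matrix.submatrix_apply, hYij p.1 q.1 p.2 q.2]
      rw [hmid, hsubY, hYvv]
      exact hcpsd (x v) _
    refine ⟨Y, hYpsd, ?_, ?_⟩
    · intro i
      by_cases hi : i = v
      · rw [hi]; exact hYvv
      · rw [hYij i i hi hi]
        exact hY'diag ⟨i, hi⟩
    · intro i j hadj
      by_cases hi : i = v
      · rw [hi] at hadj ⊢
        have hj : j ≠ v := fun h => G.irrefl (h ▸ hadj)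
        rw [hYvj j hj]
        have hjS : (⟨j, hj⟩ : {w : V // w ≠ v}) ∈ S := by simp [hSdef, hadj]
        rw [hcS _ hjS]
        simp only [hbdef, if_pos hadj]
        exact hXs v j
      · by_cases hj : j = v
        · rw [hj] at hadj ⊢
          rw [hYiv i hi]
          have hadj' : G.Adj v i := hadj.symm
          have hiS : (⟨i, hi⟩ : {w : V // w ≠ v}) ∈ S := by simp [hSdef, hadj']
          rw [hcS _ hiS]
          simp only [hbdef, if_pos hadj']
        · rw [hYij i j hi hj]
          exact hY'edge ⟨i, hi⟩ ⟨j, hj⟩ hadj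

end CC


lemma CC.quad_inst_irrel {ι : Type} (F1 F2 : Fintype ι) (M : Matrix ι ι ℝ) (x : ι → ℝ) :
    (@dotProduct ι ℝ F1 _ _ x (@Matrix.mulVec ι ι ℝ _ F1 M x))
      = @dotProduct ι ℝ F2 _ _ x (@Matrix.mulVec ι ι ℝ _ F2 M x) := by
  cases Subsingleton.elim F1 F2
  rfl

open CC in
/-- If `G` is a chordal graph on `{1, …, n}` and `X` is a real symmetric `n × n`
matrix whose principal submatrix indexed by each maximal clique of `G` is
positive semidefinite, then `X` is positive-semidefinite-completable in the edge
set of `G`: there is a PSD matrix `Y` agreeing with `X` on the diagonal and on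
the edges of `G`. -/
theorem posSemidef_completion_of_maximal_clique_submatrices_posSemidef
    {n : ℕ} (hn : 1 ≤ n) (G : SimpleGraph (Fin n)) (hG : G.IsChordal)
    (X : Matrix (Fin n) (Fin n) ℝ) (hX : X.IsSymm)
    (hcliques : ∀ C : Finset (Fin n), G.IsMaximalClique C →
      (X.submatrix (Subtype.val : {i // i ∈ C} → Fin n)
        (Subtype.val : {i // i ∈ C} → Fin n)).PosSemidef) :
    ∃ Y : Matrix (Fin n) (Fin n) ℝ, Y.PosSemidef ∧
      (∀ i : Fin n, Y i i = X i i) ∧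
      (∀ i j : Fin n, G.Adj i j → Y i j = X i j) := by
  classical
  have hcl : ∀ C : Finset (Fin n), G.IsClique (C : Set (Fin n)) →
      ∀ z : Fin n → ℝ, (∀ i ∉ C, z i = 0) → 0 ≤ z ⬝ᵥ X *ᵥ z := by
    intro C hC z hz
    obtain ⟨D, hDmax, hCD⟩ := CC.exists_max_clique G C hC
    have hpsd := hcliques D hDmax
    have hz' : ∀ i, ¬ (i ∈ D) → z i = 0 := fun i hi => hz i (fun hC' => hi (hCD hC'))
    rw [CC.quad_subtype (p := fun i => i ∈ D) X z hz']
    have h2 := hpsd.dotProduct_mulVec_nonneg (fun i : {i // i ∈ D} => z i.1)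
    have hstar : star (fun i : {i // i ∈ D} => z i.1) = (fun i : {i // i ∈ D} => z i.1) := by
      funext i; exact star_trivial _
    rw [hstar] at h2
    exact le_of_le_of_eq h2 (CC.quad_inst_irrel _ _ _ _)
  obtain ⟨Y, h1, h2, h3⟩ := CC.main_aux n (Fin n) G (by simp) hG X hX hcl
  exact ⟨Y, h1, h2, h3⟩
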